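/- Fix constants m, k, c ∈ ℝ with k ≠ 0, c ≠ 0. For (t,x,y) with t ≠ 0, x > 0, y > 0, and 4c²kt·ln(x^m y^k) + (cmt+1)² > 0, the function u(t,x,y) = -( √(4c²kt·ln(x^m y^k) + (cmt+1)²) + cmt + 1 ) / (2ckt) is a solution of the scalar PDE u_t + x·u·u_x + y·u²·u_y = 0. -/

import Mathlib

set_option maxHeartbeats 1000000 in
/-- the explicit simple wave
`u = -(√(4c²kt ln(x^m y^k) + (cmt+1)²) + cmt + 1)/(2ckt)` solves the
hydrodynamic-type equation `u_t + x u u_x + y u² u_y = 0`. -/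
theorem stmt_15 (m k c : ℝ) (hk : k ≠ 0) (hc : c ≠ 0)
    (u : ℝ → ℝ → ℝ → ℝ)
    (hu : ∀ t x y, u t x y =
      -((Real.sqrt (4 * c ^ 2 * k * t * Real.log (x ^ m * y ^ k)
          + (c * m * t + 1) ^ 2) + c * m * t + 1) / (2 * c * k * t))) :
    ∀ t x y : ℝ, t ≠ 0 → 0 < x → 0 < y →
      0 < 4 * c ^ 2 * k * t * Real.log (x ^ m * y ^ k) + (c * m * t + 1) ^ 2 →
      deriv (fun s => u s x y) t
        + x * u t x y * deriv (fun s => u t s y) x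
        + y * (u t x y) ^ 2 * deriv (fun s => u t x s) y = 0 := by
  intro t x y ht hx hy hD
  have hxm : (0:ℝ) < x ^ m := Real.rpow_pos_of_pos hx m
  have hyk : (0:ℝ) < y ^ k := Real.rpow_pos_of_pos hy k
  have hxy : x ^ m * y ^ k ≠ 0 := by positivity
  set L := Real.log (x ^ m * y ^ k) with hL
  set S := Real.sqrt (4 * c ^ 2 * k * t * L + (c * m * t + 1) ^ 2) with hSdef
  have hSpos : 0 < S := Real.sqrt_pos.mpr hD
  have hS2 : S ^ 2 = 4 * c ^ 2 * k * t * L + (c * m * t + 1) ^ 2 := Real.sq_sqrt hD.le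
  have h2ckt : (2:ℝ) * c * k * t ≠ 0 := by
    simp [hc, hk, ht]
  -- t-slice
  have hft : (fun s => u s x y) = fun s : ℝ =>
      -((Real.sqrt (4 * c ^ 2 * k * s * L + (c * m * s + 1) ^ 2) + c * m * s + 1)
        / (2 * c * k * s)) := by
    funext s; rw [hu, hL]
  have hP : HasDerivAt (fun s : ℝ => 4 * c ^ 2 * k * s * L + (c * m * s + 1) ^ 2)
      (4 * c ^ 2 * k * L + 2 * (c * m * t + 1) * (c * m)) t := by
    have ha : HasDerivAt (fun s : ℝ => 4 * c ^ 2 * k * s * L) (4 * c ^ 2 * k * L) t := by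
      simpa using (((hasDerivAt_id t).const_mul (4 * c ^ 2 * k)).mul_const L)
    have hb : HasDerivAt (fun s : ℝ => c * m * s + 1) (c * m) t := by
      simpa using ((hasDerivAt_id t).const_mul (c * m)).add_const 1
    have := ha.add (hb.pow 2)
    refine this.congr_deriv ?_
    push_cast; ring
  have hsq : HasDerivAt (fun s : ℝ => Real.sqrt (4 * c ^ 2 * k * s * L + (c * m * s + 1) ^ 2))
      ((4 * c ^ 2 * k * L + 2 * (c * m * t + 1) * (c * m)) / (2 * S)) t := by
    simpa [← hSdef] using hP.sqrt (ne_of_gt hD)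
  have hnum : HasDerivAt (fun s : ℝ =>
      Real.sqrt (4 * c ^ 2 * k * s * L + (c * m * s + 1) ^ 2) + c * m * s + 1)
      ((4 * c ^ 2 * k * L + 2 * (c * m * t + 1) * (c * m)) / (2 * S) + c * m) t := by
    have hb : HasDerivAt (fun s : ℝ => c * m * s) (c * m) t := by
      simpa using ((hasDerivAt_id t).const_mul (c * m))
    simpa using (hsq.add hb).add_const 1
  have hden : HasDerivAt (fun s : ℝ => 2 * c * k * s) (2 * c * k) t := by
    simpa using (hasDerivAt_id t).const_mul (2 * c * k)
  have hUT : deriv (fun s => u s x y) t =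
      -((((4 * c ^ 2 * k * L + 2 * (c * m * t + 1) * (c * m)) / (2 * S) + c * m)
          * (2 * c * k * t) - (S + c * m * t + 1) * (2 * c * k)) / (2 * c * k * t) ^ 2) := by
    rw [hft]
    have h := ((hnum.div hden h2ckt).neg)
    have h2 := h.deriv
    exact h2
  -- x-slice
  have hgx : (fun s => u t s y) = fun s : ℝ =>
      -((Real.sqrt (4 * c ^ 2 * k * t * Real.log (s ^ m * y ^ k) + (c * m * t + 1) ^ 2)
        + c * m * t + 1) / (2 * c * k * t)) := by
    funext s; rw [hu]
  have hrx : HasDerivAt (fun s : ℝ => s ^ m) (m * x ^ (m - 1)) x :=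
    Real.hasDerivAt_rpow_const (Or.inl hx.ne')
  have hlogx : HasDerivAt (fun s : ℝ => Real.log (s ^ m * y ^ k))
      ((m * x ^ (m - 1) * y ^ k) / (x ^ m * y ^ k)) x :=
    (hrx.mul_const (y ^ k)).log hxy
  have hargx : HasDerivAt (fun s : ℝ =>
      4 * c ^ 2 * k * t * Real.log (s ^ m * y ^ k) + (c * m * t + 1) ^ 2)
      (4 * c ^ 2 * k * t * ((m * x ^ (m - 1) * y ^ k) / (x ^ m * y ^ k))) x := by
    simpa using (hlogx.const_mul (4 * c ^ 2 * k * t)).add_const ((c * m * t + 1) ^ 2)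
  have hUX : deriv (fun s => u t s y) x =
      -((4 * c ^ 2 * k * t * ((m * x ^ (m - 1) * y ^ k) / (x ^ m * y ^ k)) / (2 * S))
        / (2 * c * k * t)) := by
    rw [hgx]
    have hne : 4 * c ^ 2 * k * t * Real.log (x ^ m * y ^ k) + (c * m * t + 1) ^ 2 ≠ 0 := by
      rw [← hL]; exact ne_of_gt hD
    have h := (((hargx.sqrt hne).add_const (c * m * t)).add_const 1).div_const (2 * c * k * t) |>.neg
    have h2 := h.deriv
    exact h2
  -- y-slice
  have hgy : (fun s => u t x s) = fun s : ℝ =>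
      -((Real.sqrt (4 * c ^ 2 * k * t * Real.log (x ^ m * s ^ k) + (c * m * t + 1) ^ 2)
        + c * m * t + 1) / (2 * c * k * t)) := by
    funext s; rw [hu]
  have hry : HasDerivAt (fun s : ℝ => s ^ k) (k * y ^ (k - 1)) y :=
    Real.hasDerivAt_rpow_const (Or.inl hy.ne')
  have hlogy : HasDerivAt (fun s : ℝ => Real.log (x ^ m * s ^ k))
      ((x ^ m * (k * y ^ (k - 1))) / (x ^ m * y ^ k)) y :=
    (hry.const_mul (x ^ m)).log hxy
  have hargy : HasDerivAt (fun s : ℝ =>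
      4 * c ^ 2 * k * t * Real.log (x ^ m * s ^ k) + (c * m * t + 1) ^ 2)
      (4 * c ^ 2 * k * t * ((x ^ m * (k * y ^ (k - 1))) / (x ^ m * y ^ k))) y := by
    simpa using (hlogy.const_mul (4 * c ^ 2 * k * t)).add_const ((c * m * t + 1) ^ 2)
  have hUY : deriv (fun s => u t x s) y =
      -((4 * c ^ 2 * k * t * ((x ^ m * (k * y ^ (k - 1))) / (x ^ m * y ^ k)) / (2 * S))
        / (2 * c * k * t)) := by
    rw [hgy]
    have hne : 4 * c ^ 2 * k * t * Real.log (x ^ m * y ^ k) + (c * m * t + 1) ^ 2 ≠ 0 := by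
      rw [← hL]; exact ne_of_gt hD
    have h := (((hargy.sqrt hne).add_const (c * m * t)).add_const 1).div_const (2 * c * k * t) |>.neg
    have h2 := h.deriv
    exact h2
  -- assemble
  have huval : u t x y = -((S + c * m * t + 1) / (2 * c * k * t)) := by
    rw [hu, ← hL, ← hSdef]
  have hxm1 : x ^ (m - 1) = x ^ m / x := by
    rw [Real.rpow_sub hx, Real.rpow_one]
  have hym1 : y ^ (k - 1) = y ^ k / y := by
    rw [Real.rpow_sub hy, Real.rpow_one]
  have hLval : L = (S ^ 2 - (c * m * t + 1) ^ 2) / (4 * c ^ 2 * k * t) := by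
    field_simp
    linarith [hS2]
  rw [hUT, hUX, hUY, huval, hxm1, hym1, hLval]
  field_simp
  ring
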